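/- For n ≥ 1, the number of voting situations with n agents on A in which the set of Tideman winners differs from the set of DQ winners is at most (m − 1)·m²·C(n + m! − 2, n). -/

import Mathlib

open Finset Filter

/-- A vote (strict linear order) on `m` alternatives, encoded by its position map:
`v x` is the position of alternative `x`, position `0` being the top.
`v` ranks `x` above `y` iff `v x < v y`. -/
abbrev Vote (m : ℕ) := Equiv.Perm (Fin m)

/-- A profile is a list of `n` votes, one per agent. -/
abbrev Profile (m n : ℕ) := Fin n → Vote m

/-- `n_{xy}[P]`: the number of votes in `P` ranking `x` above `y`. -/
def nAbove {m n : ℕ} (P : Profile m n) (x y : Fin m) : ℕ :=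
  (Finset.univ.filter (fun i => P i x < P i y)).card

/-- `adv[P](x,y) = max (0, n_{xy} - n_{yx})` (truncated subtraction on `ℕ`). -/
def adv {m n : ℕ} (P : Profile m n) (x y : Fin m) : ℕ :=
  nAbove P x y - nAbove P y x

/-- The Tideman score `Sc_T[P](a) = Σ_{b ≠ a} adv[P](b,a)`. -/
def ScT {m n : ℕ} (P : Profile m n) (a : Fin m) : ℕ :=
  ∑ b ∈ Finset.univ.filter (fun b => b ≠ a), adv P b a

/-- The Dodgson Quick score `Sc_Q[P](a) = Σ_{b ≠ a} ⌈adv[P](b,a)/2⌉`. -/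
def ScQ {m n : ℕ} (P : Profile m n) (a : Fin m) : ℕ :=
  ∑ b ∈ Finset.univ.filter (fun b => b ≠ a), (adv P b a + 1) / 2

/-- `a` is a Condorcet-tie winner of `P` iff `adv[P](b,a) = 0` for all `b ≠ a`. -/
def CondorcetTieWinner {m n : ℕ} (P : Profile m n) (a : Fin m) : Prop :=
  ∀ b, b ≠ a → adv P b a = 0

/-- `a` is a Condorcet winner of `P` iff `adv[P](a,b) > 0` for all `b ≠ a`. -/
def CondorcetWinner {m n : ℕ} (P : Profile m n) (a : Fin m) : Prop :=
  ∀ b, b ≠ a → 0 < adv P a b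

/-- `w` is obtained from the vote `v` by one swap of neighbouring alternatives
(the alternatives at consecutive positions `p` and `p+1` are exchanged). -/
def AdjSwapVote {m : ℕ} (v w : Vote m) : Prop :=
  ∃ p q : Fin m, (q : ℕ) = (p : ℕ) + 1 ∧ w = v.trans (Equiv.swap p q)

/-- `Q` is obtained from the profile `P` by one adjacent swap in one vote. -/
def AdjSwap {m n : ℕ} (P Q : Profile m n) : Prop :=
  ∃ i : Fin n, AdjSwapVote (P i) (Q i) ∧ ∀ j, j ≠ i → Q j = P j

/-- `Reach r k P Q`: `Q` can be obtained from `P` by exactly `k` steps of `r`. -/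
def Reach {α : Type*} (r : α → α → Prop) : ℕ → α → α → Prop
  | 0, P, Q => P = Q
  | (k+1), P, Q => ∃ R, r P R ∧ Reach r k R Q

/-- The Dodgson score `Sc_D[P](a)`: the minimum number of adjacent swaps needed to
transform `P` into a profile in which `a` is a Condorcet-tie winner. -/
noncomputable def ScD {m n : ℕ} (P : Profile m n) (a : Fin m) : ℕ :=
  sInf {k | ∃ Q, Reach AdjSwap k P Q ∧ CondorcetTieWinner Q a}

/-- Variant of the Dodgson score requiring `a` to become a Condorcet winner. -/
noncomputable def ScD' {m n : ℕ} (P : Profile m n) (a : Fin m) : ℕ :=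
  sInf {k | ∃ Q, Reach AdjSwap k P Q ∧ CondorcetWinner Q a}

/- Voting situations: multisets of votes.  Scores depend only on the voting
situation of a profile, so we define them directly on multisets. -/

/-- Number of votes in the voting situation `S` ranking `x` above `y`. -/
def snAbove {m : ℕ} (S : Multiset (Vote m)) (x y : Fin m) : ℕ :=
  (S.filter (fun v => v x < v y)).card

def sadv {m : ℕ} (S : Multiset (Vote m)) (x y : Fin m) : ℕ :=
  snAbove S x y - snAbove S y x

/-- Tideman score of a voting situation. -/
def sScT {m : ℕ} (S : Multiset (Vote m)) (a : Fin m) : ℕ :=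
  ∑ b ∈ Finset.univ.filter (fun b => b ≠ a), sadv S b a

/-- Dodgson Quick score of a voting situation. -/
def sScQ {m : ℕ} (S : Multiset (Vote m)) (a : Fin m) : ℕ :=
  ∑ b ∈ Finset.univ.filter (fun b => b ≠ a), (sadv S b a + 1) / 2

def sCondorcetTieWinner {m : ℕ} (S : Multiset (Vote m)) (a : Fin m) : Prop :=
  ∀ b, b ≠ a → sadv S b a = 0

/-- One adjacent swap applied to one vote of a voting situation. -/
def sAdjSwap {m : ℕ} (S T : Multiset (Vote m)) : Prop :=
  ∃ v ∈ S, ∃ w, AdjSwapVote v w ∧ T = w ::ₘ S.erase v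

/-- Dodgson score of a voting situation. -/
noncomputable def sScD {m : ℕ} (S : Multiset (Vote m)) (a : Fin m) : ℕ :=
  sInf {k | ∃ T, Reach sAdjSwap k S T ∧ sCondorcetTieWinner T a}

/-- `a` is a Tideman winner (minimal Tideman score). -/
def sTWinner {m : ℕ} (S : Multiset (Vote m)) (a : Fin m) : Prop :=
  ∀ b, sScT S a ≤ sScT S b

/-- `a` is a DQ winner (minimal DQ score). -/
def sQWinner {m : ℕ} (S : Multiset (Vote m)) (a : Fin m) : Prop :=
  ∀ b, sScQ S a ≤ sScQ S b

/-- `a` is a Dodgson winner (minimal Dodgson score). -/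
def sDWinner {m : ℕ} (S : Multiset (Vote m)) (a : Fin m) : Prop :=
  ∀ b, sScD S a ≤ sScD S b

/-! ### Auxiliary lemmas -/

section Aux

variable {m : ℕ}

lemma aux_card_filter_ne (a : Fin m) :
    (Finset.univ.filter (fun b => b ≠ a)).card = m - 1 := by
  rw [Finset.filter_ne', Finset.card_erase_of_mem (Finset.mem_univ a), Finset.card_univ,
    Fintype.card_fin]

lemma aux_scT_le (S : Multiset (Vote m)) (a : Fin m) : sScT S a ≤ 2 * sScQ S a := by
  unfold sScT sScQ
  rw [Finset.mul_sum]
  exact Finset.sum_le_sum fun x _ => by omega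

lemma aux_scQ_le (S : Multiset (Vote m)) (a : Fin m) :
    2 * sScQ S a ≤ sScT S a + (m - 1) := by
  unfold sScT sScQ
  rw [Finset.mul_sum]
  calc ∑ b ∈ Finset.univ.filter (fun b => b ≠ a), 2 * ((sadv S b a + 1) / 2)
      ≤ ∑ b ∈ Finset.univ.filter (fun b => b ≠ a), (sadv S b a + 1) :=
        Finset.sum_le_sum fun x _ => by omega
    _ = (∑ b ∈ Finset.univ.filter (fun b => b ≠ a), sadv S b a) + (m - 1) := by
        rw [Finset.sum_add_distrib, Finset.sum_const, smul_eq_mul, mul_one, aux_card_filter_ne]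

lemma aux_band (hm : 2 ≤ m) (S : Multiset (Vote m))
    (h : {x : Fin m | sTWinner S x} ≠ {x : Fin m | sQWinner S x}) :
    ∃ a b : Fin m, a ≠ b ∧ sScT S b ≤ sScT S a ∧ sScT S a < sScT S b + m := by
  have hne : (Finset.univ : Finset (Fin m)).Nonempty := ⟨⟨0, by omega⟩, Finset.mem_univ _⟩
  obtain ⟨x, hx⟩ : ∃ x, ¬(sTWinner S x ↔ sQWinner S x) := by
    by_contra hc
    push_neg at hc
    exact h (Set.ext fun x => hc x)
  rcases (by tauto : (sTWinner S x ∧ ¬ sQWinner S x) ∨ (¬ sTWinner S x ∧ sQWinner S x)) with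
    ⟨hT, hQ⟩ | ⟨hT, hQ⟩
  · obtain ⟨y, -, hy⟩ := Finset.exists_min_image Finset.univ (sScQ S) hne
    obtain ⟨z, hz⟩ : ∃ z, sScQ S z < sScQ S x := by
      unfold sQWinner at hQ; push_neg at hQ; exact hQ
    have h1 : sScQ S y < sScQ S x := lt_of_le_of_lt (hy z (Finset.mem_univ z)) hz
    have h2 : sScT S x ≤ sScT S y := hT y
    refine ⟨y, x, ?_, h2, ?_⟩
    · rintro rfl; omega
    · have e1 := aux_scT_le S y
      have e2 := aux_scQ_le S x
      have e3 := hy x (Finset.mem_univ x)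
      omega
  · obtain ⟨y, -, hy⟩ := Finset.exists_min_image Finset.univ (sScT S) hne
    obtain ⟨z, hz⟩ : ∃ z, sScT S z < sScT S x := by
      unfold sTWinner at hT; push_neg at hT; exact hT
    have h1 : sScT S y < sScT S x := lt_of_le_of_lt (hy z (Finset.mem_univ z)) hz
    refine ⟨x, y, ?_, le_of_lt h1, ?_⟩
    · rintro rfl; omega
    · have e1 := aux_scT_le S x
      have e2 := aux_scQ_le S y
      have e3 : sScQ S x ≤ sScQ S y := hQ y
      omega

/-- Existence of a pair of votes `v, w` that rank `b, a` (resp. `a, b`) in the top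
two positions, agreeing on all other comparisons. -/
lemma aux_exists_vw (hm : 2 ≤ m) {a b : Fin m} (hab : a ≠ b) :
    ∃ v w : Vote m, v ≠ w ∧ (v b < v a) ∧ ¬(w b < w a) ∧
      ∀ x y : Fin m, (x ≠ a ∨ y ≠ b) → (x ≠ b ∨ y ≠ a) → (v x < v y ↔ w x < w y) := by
  have h0 : 0 < m := by omega
  have h1 : 1 < m := by omega
  set z0 : Fin m := ⟨0, h0⟩ with hz0
  set z1 : Fin m := ⟨1, h1⟩ with hz1
  have hz : z0 ≠ z1 := by simp [hz0, hz1, Fin.ext_iff]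
  set π : Equiv.Perm (Fin m) := Equiv.swap b z0 with hπ
  have hπb : π b = z0 := Equiv.swap_apply_left _ _
  set b' : Fin m := π a with hb'
  have hb'0 : b' ≠ z0 := fun h => hab (π.injective (h.trans hπb.symm))
  set ρ : Equiv.Perm (Fin m) := Equiv.swap b' z1 with hρ
  set v : Vote m := π.trans ρ with hv
  have hvb : v b = z0 := by
    show ρ (π b) = z0
    rw [hπb]
    exact Equiv.swap_apply_of_ne_of_ne (Ne.symm hb'0) hz
  have hva : v a = z1 := by
    show ρ (π a) = z1
    exact Equiv.swap_apply_left _ _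
  set w : Vote m := v.trans (Equiv.swap z0 z1) with hw
  have hwb : w b = z1 := by
    show Equiv.swap z0 z1 (v b) = z1
    rw [hvb]; exact Equiv.swap_apply_left _ _
  have hwa : w a = z0 := by
    show Equiv.swap z0 z1 (v a) = z0
    rw [hva]; exact Equiv.swap_apply_right _ _
  have key : ∀ x : Fin m, (x = a ∧ (v x).val = 1 ∧ (w x).val = 0) ∨
      (x = b ∧ (v x).val = 0 ∧ (w x).val = 1) ∨
      (x ≠ a ∧ x ≠ b ∧ (w x).val = (v x).val ∧ 2 ≤ (v x).val) := by
    intro x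
    by_cases hxa : x = a
    · subst hxa
      exact Or.inl ⟨rfl, by rw [hva], by rw [hwa]⟩
    by_cases hxb : x = b
    · subst hxb
      exact Or.inr (Or.inl ⟨rfl, by rw [hvb], by rw [hwb]⟩)
    · refine Or.inr (Or.inr ⟨hxa, hxb, ?_, ?_⟩)
      · have h2 : v x ≠ z0 := fun h => hxb (v.injective (h.trans hvb.symm))
        have h3 : v x ≠ z1 := fun h => hxa (v.injective (h.trans hva.symm))
        show (Equiv.swap z0 z1 (v x)).val = (v x).val
        rw [Equiv.swap_apply_of_ne_of_ne h2 h3]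
      · have h2 : (v x).val ≠ 0 := fun h => hxb (v.injective ((Fin.ext h).trans hvb.symm))
        have h3 : (v x).val ≠ 1 := fun h => hxa (v.injective ((Fin.ext h).trans hva.symm))
        omega
  refine ⟨v, w, ?_, ?_, ?_, ?_⟩
  · intro h
    apply hz
    rw [← hvb, h]; exact hwb
  · rw [hvb, hva]; exact hz.lt_of_le (by simp [hz0, hz1, Fin.le_def])
  · rw [hwb, hwa]
    simp [hz0, hz1, Fin.lt_def]
  · intro x y h1' h2'
    rw [Fin.lt_def, Fin.lt_def]
    rcases key x with ⟨hx, e1, e2⟩ | ⟨hx, e1, e2⟩ | ⟨hx1, hx2, e1, e2⟩ <;>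
      rcases key y with ⟨hy, f1, f2⟩ | ⟨hy, f1, f2⟩ | ⟨hy1, hy2, f1, f2⟩ <;>
      first | omega | tauto

lemma aux_countP_inv {v w : Vote m} {g : Vote m → Vote m}
    (hg : ∀ u, u ≠ w → g u = u) (hgw : g w = v)
    {S S' : Multiset (Vote m)} (hmap : S.map g = S'.map g)
    (p : Vote m → Prop) [DecidablePred p] (hp : p v ↔ p w) :
    Multiset.countP p S = Multiset.countP p S' := by
  have h : ∀ T : Multiset (Vote m), Multiset.countP p (T.map g) = Multiset.countP p T := by
    intro T
    rw [Multiset.countP_map, ← Multiset.countP_eq_card_filter]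
    refine Multiset.countP_congr rfl fun u _ => ?_
    by_cases hu : u = w
    · subst hu
      rw [hgw]
      exact eq_iff_iff.mpr hp
    · rw [hg u hu]
  rw [← h S, hmap, h S']

lemma aux_snAbove_countP (S : Multiset (Vote m)) (x y : Fin m) :
    snAbove S x y = Multiset.countP (fun u => u x < u y) S :=
  (Multiset.countP_eq_card_filter _ _).symm

lemma aux_snAbove_add (S : Multiset (Vote m)) {x y : Fin m} (hxy : x ≠ y) :
    snAbove S x y + snAbove S y x = Multiset.card S := by
  unfold snAbove
  have h1 : S.filter (fun u => u y < u x) = S.filter (fun u => ¬ u x < u y) := by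
    refine Multiset.filter_congr fun u _ => ?_
    have hne : (u x).val ≠ (u y).val := fun h => hxy (u.injective (Fin.ext h))
    rw [Fin.lt_def, Fin.lt_def]
    constructor <;> intro <;> omega
  rw [h1]
  rw [← Multiset.card_add, Multiset.filter_add_not]

lemma aux_scT_split {a b : Fin m} (hab : a ≠ b) (T : Multiset (Vote m)) :
    sScT T a = sadv T b a +
      ∑ x ∈ Finset.univ.filter (fun x => x ≠ a ∧ x ≠ b), sadv T x a := by
  unfold sScT
  have hset : Finset.univ.filter (fun x => x ≠ a) =
      insert b (Finset.univ.filter (fun x => x ≠ a ∧ x ≠ b)) := by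
    ext x
    simp only [Finset.mem_filter, Finset.mem_univ, true_and, Finset.mem_insert]
    constructor
    · intro hx
      by_cases hxb : x = b
      · exact Or.inl hxb
      · exact Or.inr ⟨hx, hxb⟩
    · rintro (rfl | ⟨hx, -⟩)
      · exact Ne.symm hab
      · exact hx
  rw [hset, Finset.sum_insert (by simp)]

lemma aux_scT_split' {a b : Fin m} (hab : a ≠ b) (T : Multiset (Vote m)) :
    sScT T b = sadv T a b +
      ∑ x ∈ Finset.univ.filter (fun x => x ≠ a ∧ x ≠ b), sadv T x b := by
  have h := aux_scT_split (Ne.symm hab) T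
  have hs : (Finset.univ.filter (fun x => x ≠ b ∧ x ≠ a)) =
      (Finset.univ.filter (fun x => x ≠ a ∧ x ≠ b)) := by
    ext x; simp only [Finset.mem_filter]; tauto
  rwa [hs] at h

/-- The key injectivity lemma: profiles with a prescribed Tideman score gap between `a`
and `b` are determined by their image under merging the two special votes `v, w`. -/
lemma aux_inj (hm : 2 ≤ m) {a b : Fin m} (hab : a ≠ b) (c : ℕ) :
    ∃ (w : Vote m) (g : Vote m → Vote m), (∀ u, g u ≠ w) ∧
      ∀ S S' : Multiset (Vote m), Multiset.card S = Multiset.card S' →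
        sScT S a = sScT S b + c → sScT S' a = sScT S' b + c →
        S.map g = S'.map g → S = S' := by
  classical
  obtain ⟨v, w, hvw, hvba, hwba, hinv⟩ := aux_exists_vw hm hab
  refine ⟨w, fun u => if u = w then v else u, fun u => ?_, ?_⟩
  · by_cases hu : u = w
    · simpa [hu] using hvw
    · simpa [hu] using hu
  set g : Vote m → Vote m := fun u => if u = w then v else u with hgdef
  intro S S' hcard hS hS' hmap
  have hg : ∀ u, u ≠ w → g u = u := fun u hu => if_neg hu
  have hgw : g w = v := if_pos rfl
  -- countP of invariant predicates are equal
  have hINV : ∀ (p : Vote m → Prop) (_ : DecidablePred p), (p v ↔ p w) →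
      Multiset.countP p S = Multiset.countP p S' := by
    intro p hdec hp
    exact aux_countP_inv hg hgw hmap p hp
  -- snAbove invariances away from the ordered pairs (a,b) and (b,a)
  have hsn : ∀ x y : Fin m, (x ≠ a ∨ y ≠ b) → (x ≠ b ∨ y ≠ a) →
      snAbove S x y = snAbove S' x y := by
    intro x y h1 h2
    rw [aux_snAbove_countP, aux_snAbove_countP]
    exact hINV _ _ (hinv x y h1 h2)
  -- pin down snAbove S b a
  have hpin : snAbove S b a = snAbove S' b a := by
    have e1 := aux_scT_split hab S
    have e2 := aux_scT_split' hab S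
    have e1' := aux_scT_split hab S'
    have e2' := aux_scT_split' hab S'
    have hRa : ∑ x ∈ Finset.univ.filter (fun x => x ≠ a ∧ x ≠ b), sadv S x a =
        ∑ x ∈ Finset.univ.filter (fun x => x ≠ a ∧ x ≠ b), sadv S' x a := by
      refine Finset.sum_congr rfl fun x hx => ?_
      simp only [Finset.mem_filter] at hx
      unfold sadv
      rw [hsn x a (Or.inl hx.2.1) (Or.inl hx.2.2),
        hsn a x (Or.inr hx.2.2) (Or.inl hab)]
    have hRb : ∑ x ∈ Finset.univ.filter (fun x => x ≠ a ∧ x ≠ b), sadv S x b =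
        ∑ x ∈ Finset.univ.filter (fun x => x ≠ a ∧ x ≠ b), sadv S' x b := by
      refine Finset.sum_congr rfl fun x hx => ?_
      simp only [Finset.mem_filter] at hx
      unfold sadv
      rw [hsn x b (Or.inl hx.2.1) (Or.inl hx.2.2),
        hsn b x (Or.inl (Ne.symm hab)) (Or.inr hx.2.1)]
    have hcs : snAbove S b a + snAbove S a b = Multiset.card S :=
      aux_snAbove_add S (Ne.symm hab)
    have hcs' : snAbove S' b a + snAbove S' a b = Multiset.card S' :=
      aux_snAbove_add S' (Ne.symm hab)
    have hadv1 : sadv S b a = snAbove S b a - snAbove S a b := rfl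
    have hadv2 : sadv S a b = snAbove S a b - snAbove S b a := rfl
    have hadv1' : sadv S' b a = snAbove S' b a - snAbove S' a b := rfl
    have hadv2' : sadv S' a b = snAbove S' a b - snAbove S' b a := rfl
    omega
  -- now recover all multiplicities
  have hpv : v b < v a := hvba
  have hpw : ¬ (w b < w a) := hwba
  have hcp : Multiset.countP (fun u : Vote m => u b < u a) S =
      Multiset.countP (fun u : Vote m => u b < u a) S' := by
    rw [← aux_snAbove_countP, ← aux_snAbove_countP]; exact hpin
  have hcount_split : ∀ (T : Multiset (Vote m)) (u0 : Vote m) (q : Vote m → Prop)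
      (_ : DecidablePred q), q u0 →
      Multiset.count u0 T + Multiset.countP (fun u => q u ∧ u ≠ u0) T =
        Multiset.countP q T := by
    intro T u0 q hdec hq
    have h1 : Multiset.filter (fun u => u = u0) (Multiset.filter q T) +
        Multiset.filter (fun u => ¬ u = u0) (Multiset.filter q T) = Multiset.filter q T :=
      Multiset.filter_add_not _ _
    have h2 := congrArg Multiset.card h1
    rw [Multiset.card_add] at h2
    have h3 : Multiset.filter (fun u => u = u0) (Multiset.filter q T) =
        Multiset.filter (fun u => u = u0) T := by
      rw [Multiset.filter_filter]
      exact Multiset.filter_congr fun u _ => by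
        constructor
        · rintro ⟨h, -⟩; exact h
        · intro h; exact ⟨h, h ▸ hq⟩
    have h4 : (Multiset.filter (fun u => u = u0) T).card = Multiset.count u0 T := by
      rw [Multiset.count, Multiset.countP_eq_card_filter]
      congr 1
      exact Multiset.filter_congr fun u _ => by constructor <;> (intro h; exact h.symm)
    have h5 : Multiset.filter (fun u => ¬ u = u0) (Multiset.filter q T) =
        Multiset.filter (fun u => q u ∧ u ≠ u0) T := by
      rw [Multiset.filter_filter]
      exact Multiset.filter_congr fun u _ => by tauto
    rw [h3, h4, h5, ← Multiset.countP_eq_card_filter, ← Multiset.countP_eq_card_filter] at h2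
    exact h2
  have hcv : Multiset.count v S = Multiset.count v S' := by
    have e1 : Multiset.count v S + Multiset.countP (fun u : Vote m => u b < u a ∧ u ≠ v) S =
        Multiset.countP (fun u : Vote m => u b < u a) S :=
      hcount_split S v (fun u : Vote m => u b < u a) (by infer_instance) hpv
    have e1' : Multiset.count v S' + Multiset.countP (fun u : Vote m => u b < u a ∧ u ≠ v) S' =
        Multiset.countP (fun u : Vote m => u b < u a) S' :=
      hcount_split S' v (fun u : Vote m => u b < u a) (by infer_instance) hpv
    have e2 : Multiset.countP (fun u : Vote m => u b < u a ∧ u ≠ v) S =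
        Multiset.countP (fun u : Vote m => u b < u a ∧ u ≠ v) S' := by
      refine hINV (fun u : Vote m => u b < u a ∧ u ≠ v) (by infer_instance) ?_
      constructor
      · rintro ⟨-, h⟩; exact absurd rfl h
      · rintro ⟨h, -⟩; exact absurd h hpw
    omega
  have hcnp : Multiset.countP (fun u : Vote m => ¬ (u b < u a)) S =
      Multiset.countP (fun u : Vote m => ¬ (u b < u a)) S' := by
    have e1 : Multiset.countP (fun u : Vote m => u b < u a) S +
        Multiset.countP (fun u : Vote m => ¬ (u b < u a)) S = Multiset.card S := by
      rw [Multiset.countP_eq_card_filter, Multiset.countP_eq_card_filter,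
        ← Multiset.card_add, Multiset.filter_add_not]
    have e2 : Multiset.countP (fun u : Vote m => u b < u a) S' +
        Multiset.countP (fun u : Vote m => ¬ (u b < u a)) S' = Multiset.card S' := by
      rw [Multiset.countP_eq_card_filter, Multiset.countP_eq_card_filter,
        ← Multiset.card_add, Multiset.filter_add_not]
    omega
  have hcw : Multiset.count w S = Multiset.count w S' := by
    have e1 : Multiset.count w S + Multiset.countP (fun u : Vote m => ¬ (u b < u a) ∧ u ≠ w) S =
        Multiset.countP (fun u : Vote m => ¬ (u b < u a)) S :=
      hcount_split S w (fun u : Vote m => ¬ (u b < u a)) (by infer_instance) hpw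
    have e1' : Multiset.count w S' + Multiset.countP (fun u : Vote m => ¬ (u b < u a) ∧ u ≠ w) S' =
        Multiset.countP (fun u : Vote m => ¬ (u b < u a)) S' :=
      hcount_split S' w (fun u : Vote m => ¬ (u b < u a)) (by infer_instance) hpw
    have e2 : Multiset.countP (fun u : Vote m => ¬ (u b < u a) ∧ u ≠ w) S =
        Multiset.countP (fun u : Vote m => ¬ (u b < u a) ∧ u ≠ w) S' := by
      refine hINV (fun u : Vote m => ¬ (u b < u a) ∧ u ≠ w) (by infer_instance) ?_
      constructor
      · rintro ⟨h, -⟩; exact absurd hpv h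
      · rintro ⟨-, h⟩; exact absurd rfl h
    omega
  have hcother : ∀ u : Vote m, u ≠ v → u ≠ w →
      Multiset.count u S = Multiset.count u S' := by
    intro u huv huw
    have h : ∀ T : Multiset (Vote m), Multiset.count u (T.map g) = Multiset.count u T := by
      intro T
      rw [Multiset.count_map]
      rw [Multiset.count, Multiset.countP_eq_card_filter]
      congr 1
      refine Multiset.filter_congr fun t _ => ?_
      by_cases ht : t = w
      · rw [ht, hgw]
        constructor
        · intro h; exact absurd h huv
        · intro h; exact absurd h huw
      · rw [hg t ht]
    rw [← h S, hmap, h S']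
  refine Multiset.ext.mpr fun u => ?_
  by_cases huv : u = v
  · subst huv; exact hcv
  by_cases huw : u = w
  · subst huw; exact hcw
  · exact hcother u huv huw

/-- Counting lemma: the number of voting situations with a prescribed Tideman score
gap between two fixed alternatives is at most `C(n + m! - 2, n)`. -/
lemma aux_count (hm : 2 ≤ m) {a b : Fin m} (hab : a ≠ b) (c n : ℕ) :
    Set.ncard {S : Sym (Vote m) n |
        sScT (S : Multiset (Vote m)) a = sScT (S : Multiset (Vote m)) b + c} ≤
      (n + Nat.factorial m - 2).choose n := by
  classical
  obtain ⟨w, g, hgne, hinj⟩ := aux_inj hm hab c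
  set g' : Vote m → {u : Vote m // u ≠ w} := fun u => ⟨g u, hgne u⟩ with hg'
  set f : Sym (Vote m) n → Sym {u : Vote m // u ≠ w} n :=
    fun S => ⟨(S : Multiset (Vote m)).map g', by rw [Multiset.card_map]; exact S.2⟩ with hf
  have hinjOn : Set.InjOn f {S : Sym (Vote m) n |
      sScT (S : Multiset (Vote m)) a = sScT (S : Multiset (Vote m)) b + c} := by
    intro S hS S' hS' hff
    have hmap : (S : Multiset (Vote m)).map g = (S' : Multiset (Vote m)).map g := by
      have h1 := congrArg (fun T : Sym {u : Vote m // u ≠ w} n =>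
        Multiset.map (Subtype.val) (T : Multiset {u : Vote m // u ≠ w})) hff
      simpa [hf, Multiset.map_map, Function.comp, hg'] using h1
    have hcard : Multiset.card (S : Multiset (Vote m)) =
        Multiset.card (S' : Multiset (Vote m)) := by
      have h1 : Multiset.card (S : Multiset (Vote m)) = n := S.2
      have h2 : Multiset.card (S' : Multiset (Vote m)) = n := S'.2
      rw [h1, h2]
    exact Subtype.ext (hinj _ _ hcard hS hS' hmap)
  have hle := Set.ncard_le_ncard_of_injOn f (fun x _ => Set.mem_univ (f x)) hinjOn
    Set.finite_univ
  rw [Set.ncard_univ, Nat.card_eq_fintype_card, Sym.card_sym_eq_choose] at hle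
  have hcardsub : Fintype.card {u : Vote m // u ≠ w} = Nat.factorial m - 1 := by
    have h1 : Fintype.card {u : Vote m // ¬ u = w} =
        Fintype.card (Vote m) - Fintype.card {u : Vote m // u = w} :=
      Fintype.card_subtype_compl _
    have h2 : Fintype.card {u : Vote m // u = w} = 1 := Fintype.card_subtype_eq w
    have h3 : Fintype.card (Vote m) = Nat.factorial m := by
      rw [Fintype.card_perm, Fintype.card_fin]
    calc Fintype.card {u : Vote m // u ≠ w} = Fintype.card {u : Vote m // ¬ u = w} := rfl
      _ = Nat.factorial m - 1 := by rw [h1, h2, h3]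
  rw [hcardsub] at hle
  have hfac : 1 ≤ Nat.factorial m := Nat.factorial_pos m
  have : Nat.factorial m - 1 + n - 1 = n + Nat.factorial m - 2 := by omega
  rwa [this] at hle

lemma aux_ncard_iUnion_le {α ι : Type*} [Fintype α] [Fintype ι] (s : ι → Set α) :
    (⋃ i, s i).ncard ≤ ∑ i : ι, (s i).ncard := by
  classical
  have h : ∀ t : Finset ι, (⋃ i ∈ t, s i).ncard ≤ ∑ i ∈ t, (s i).ncard := by
    intro t
    induction t using Finset.induction with
    | empty => simp
    | @insert a t ha ih =>
      rw [Finset.sum_insert ha, Finset.set_biUnion_insert]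
      exact le_trans (Set.ncard_union_le _ _) (Nat.add_le_add_left ih _)
  have h2 := h Finset.univ
  simpa using h2

end Aux

/-- For `n ≥ 1`, the number of voting situations with `n` agents in which the set
of Tideman winners differs from the set of DQ winners is at most
`(m − 1)·m²·C(n + m! − 2, n)`. -/
theorem stmt_8 {m : ℕ} (hm : 2 ≤ m) (n : ℕ) (hn : 1 ≤ n) :
    Set.ncard {S : Sym (Vote m) n |
        {x : Fin m | sTWinner (S : Multiset (Vote m)) x} ≠
        {x : Fin m | sQWinner (S : Multiset (Vote m)) x}} ≤
      (m - 1) * m ^ 2 * Nat.choose (n + Nat.factorial m - 2) n := by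
  classical
  set C : ℕ := Nat.choose (n + Nat.factorial m - 2) n with hC
  set E : Fin m × Fin m × Fin m → Set (Sym (Vote m) n) := fun i =>
    if i.1 = i.2.1 then ∅ else
      {S : Sym (Vote m) n |
        sScT (S : Multiset (Vote m)) i.1 = sScT (S : Multiset (Vote m)) i.2.1 + (i.2.2 : ℕ)}
    with hE
  have hsub : {S : Sym (Vote m) n |
      {x : Fin m | sTWinner (S : Multiset (Vote m)) x} ≠
        {x : Fin m | sQWinner (S : Multiset (Vote m)) x}} ⊆ ⋃ i, E i := by
    intro S hS
    obtain ⟨a, b, hab, h1, h2⟩ := aux_band hm (S : Multiset (Vote m)) hS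
    set c : ℕ := sScT (S : Multiset (Vote m)) a - sScT (S : Multiset (Vote m)) b with hc
    have hcm : c < m := by omega
    refine Set.mem_iUnion.mpr ⟨(a, b, ⟨c, hcm⟩), ?_⟩
    rw [hE]
    simp only [if_neg hab]
    show sScT (S : Multiset (Vote m)) a = sScT (S : Multiset (Vote m)) b + c
    omega
  have hbound : ∀ i : Fin m × Fin m × Fin m,
      (E i).ncard ≤ if i.1 = i.2.1 then 0 else C := by
    intro i
    rw [hE]
    by_cases h : i.1 = i.2.1
    · simp [h]
    · simp only [if_neg h]
      exact aux_count hm h (i.2.2 : ℕ) n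
  calc Set.ncard {S : Sym (Vote m) n |
        {x : Fin m | sTWinner (S : Multiset (Vote m)) x} ≠
          {x : Fin m | sQWinner (S : Multiset (Vote m)) x}}
      ≤ (⋃ i, E i).ncard := by
        refine Set.ncard_le_ncard hsub (Set.toFinite _)
    _ ≤ ∑ i : Fin m × Fin m × Fin m, (E i).ncard := aux_ncard_iUnion_le E
    _ ≤ ∑ i : Fin m × Fin m × Fin m, (if i.1 = i.2.1 then 0 else C) :=
        Finset.sum_le_sum fun i _ => hbound i
    _ = ∑ a : Fin m, ∑ b : Fin m, ∑ _c : Fin m, (if a = b then 0 else C) := by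
        rw [Fintype.sum_prod_type]
        refine Finset.sum_congr rfl fun a _ => ?_
        rw [Fintype.sum_prod_type]
    _ = ∑ a : Fin m, ∑ b : Fin m, (if a = b then 0 else m * C) := by
        refine Finset.sum_congr rfl fun a _ => Finset.sum_congr rfl fun b _ => ?_
        split
        · simp
        · simp [Finset.sum_const, Finset.card_univ, mul_comm]
    _ = ∑ _a : Fin m, (m - 1) * (m * C) := by
        refine Finset.sum_congr rfl fun a _ => ?_
        have h1 : ∑ b : Fin m, (if a = b then 0 else m * C) +
            ∑ b : Fin m, (if a = b then m * C else 0) = ∑ b : Fin m, m * C := by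
          rw [← Finset.sum_add_distrib]
          refine Finset.sum_congr rfl fun b _ => by split <;> omega
        have h2 : ∑ b : Fin m, (if a = b then m * C else 0) = m * C := by
          rw [Finset.sum_ite_eq]
          simp
        have h3 : ∑ b : Fin m, m * C = m * (m * C) := by
          rw [Finset.sum_const, Finset.card_univ, Fintype.card_fin, smul_eq_mul]
        rw [Nat.sub_one_mul]
        omega
    _ = (m - 1) * m ^ 2 * C := by
        rw [Finset.sum_const, Finset.card_univ, Fintype.card_fin, smul_eq_mul]
        ring
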